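/- arXiv:2202.07845 — 2 statements merged into one kernel-verified Lean document; each statement's English description precedes it below -/
import Mathlib

section
/- Anti-monotonicity of minimum-image-based support: if Q' is a sub-pattern of Q (i.e., Q' is an induced restriction of Q to a subset of its nodes and a subset of its edges), then for every graph G, Sup(Q',G) ≥ Sup(Q,G). -/
structure LGraph (V : Type) (L : Type) where
  adj : V → V → Prop
  label : V → L

/-- A match (label-preserving subgraph isomorphism) of pattern `Q` into graph `G`. -/
def IsMatch {P V L : Type} (Q : LGraph P L) (G : LGraph V L) (ρ : P → V) : Prop :=
  Function.Injective ρ ∧ (∀ u, G.label (ρ u) = Q.label u) ∧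
    ∀ u u', Q.adj u u' → G.adj (ρ u) (ρ u')

/-- The image of a pattern node `u`: all vertices of `G` appearing as `ρ u` for some match. -/
def Img {P V L : Type} (Q : LGraph P L) (G : LGraph V L) (u : P) : Set V :=
  {v | ∃ ρ, IsMatch Q G ρ ∧ ρ u = v}

/-- Minimum-image-based support: the minimum over pattern nodes of `|Img u|`. -/
noncomputable def Supp {P V L : Type} [Fintype P] [Nonempty P]
    (Q : LGraph P L) (G : LGraph V L) : ℕ :=
  Finset.univ.inf' Finset.univ_nonempty (fun u => (Img Q G u).ncard)

/-- Anti-monotonicity of minimum-image-based support: if `Q'` is a sub-pattern of `Q`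
(witnessed by an injection `ι` of node sets preserving labels and edges), then
for every finite graph `G`, `Sup(Q',G) ≥ Sup(Q,G)`. -/
theorem supp_antimono {P P' V L : Type} [Fintype P] [Nonempty P] [Fintype P'] [Nonempty P']
    [Fintype V]
    (Q : LGraph P L) (Q' : LGraph P' L) (G : LGraph V L) (ι : P' → P)
    (hinj : Function.Injective ι)
    (hlab : ∀ u, Q'.label u = Q.label (ι u))
    (hadj : ∀ u u', Q'.adj u u' → Q.adj (ι u) (ι u')) :
    Supp Q G ≤ Supp Q' G := by
  apply Finset.le_inf'
  intro u' _
  have hsub : Img Q G (ι u') ⊆ Img Q' G u' := by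
    rintro v ⟨ρ, ⟨hρinj, hρlab, hρadj⟩, rfl⟩
    exact ⟨ρ ∘ ι, ⟨hρinj.comp hinj,
      fun u => by simp [hρlab (ι u), hlab u],
      fun a b h => hρadj _ _ (hadj a b h)⟩, rfl⟩
  calc Supp Q G ≤ (Img Q G (ι u')).ncard := Finset.inf'_le _ (Finset.mem_univ _)
    _ ≤ (Img Q' G u').ncard := Set.ncard_le_ncard hsub (Set.toFinite _)
end

section
/- If a pattern Q is frequent in G with threshold θ (Sup(Q,G) ≥ θ), then every nonempty sub-pattern Q' of Q is also frequent: Sup(Q',G) ≥ θ. -/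
/-- If `Q` is frequent with threshold `θ`, every nonempty sub-pattern `Q'` is frequent. -/
theorem subpattern_frequent {P P' V L : Type} [Fintype P] [Nonempty P] [Fintype P'] [Nonempty P']
    [Fintype V]
    (Q : LGraph P L) (Q' : LGraph P' L) (G : LGraph V L) (ι : P' → P)
    (hinj : Function.Injective ι)
    (hlab : ∀ u, Q'.label u = Q.label (ι u))
    (hadj : ∀ u u', Q'.adj u u' → Q.adj (ι u) (ι u'))
    (θ : ℕ) (hfreq : θ ≤ Supp Q G) :
    θ ≤ Supp Q' G := by
  apply Finset.le_inf'
  intro u _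
  have hsub : Img Q G (ι u) ⊆ Img Q' G u := by
    rintro v ⟨ρ, ⟨hρinj, hρlab, hρadj⟩, rfl⟩
    exact ⟨ρ ∘ ι, ⟨hρinj.comp hinj,
      fun w => (hρlab (ι w)).trans (hlab w).symm,
      fun w w' h => hρadj _ _ (hadj w w' h)⟩, rfl⟩
  calc θ ≤ Supp Q G := hfreq
    _ ≤ (Img Q G (ι u)).ncard := Finset.inf'_le _ (Finset.mem_univ _)
    _ ≤ (Img Q' G u).ncard := Set.ncard_le_ncard hsub (Set.toFinite _)
end
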